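/- Let (S, ρ) be a metric space in which all closed bounded subsets are compact, and let Q be a Borel probability measure on S whose Fréchet function F(p) = ∫ ρ²(p,q) Q(dq) is finite at some point. Then the set C(Q) of minimizers of F is nonempty and compact. -/

import Mathlib

open MeasureTheory Filter Topology
open scoped ENNReal

/-- On a metric space with the Heine–Borel property (proper space), if the Fréchet
function of a Borel probability measure is finite at some point, then the Fréchet
mean set (set of minimizers) is nonempty and compact. -/
theorem frechet_mean_set_nonempty_compact
    {S : Type*} [MetricSpace S] [ProperSpace S]
    [MeasurableSpace S] [BorelSpace S]
    (Q : Measure S) [IsProbabilityMeasure Q]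
    (F : S → ℝ≥0∞)
    (hF : ∀ p, F p = ∫⁻ q, ENNReal.ofReal (dist p q ^ 2) ∂Q)
    (hfin : ∃ p, F p < ⊤) :
    {p : S | ∀ q, F p ≤ F q}.Nonempty ∧ IsCompact {p : S | ∀ q, F p ≤ F q} := by
  classical
  obtain ⟨p₀, hp₀⟩ := hfin
  have hmeas : ∀ p : S, Measurable fun q => ENNReal.ofReal (dist p q ^ 2) := fun p =>
    ENNReal.measurable_ofReal.comp (((continuous_const.dist continuous_id).pow 2).measurable)
  have hmeasd : ∀ p : S, Measurable fun q : S => ENNReal.ofReal (dist p q) := fun p =>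
    ENNReal.measurable_ofReal.comp ((continuous_const.dist continuous_id).measurable)
  -- the common error-integral computation
  have integ : ∀ (a b : S) (d : ℝ),
      (∫⁻ q, (ENNReal.ofReal (dist a q ^ 2) +
        (ENNReal.ofReal (2 * d) * ENNReal.ofReal (dist b q) +
          ENNReal.ofReal (3 * d ^ 2))) ∂Q)
      = F a + (ENNReal.ofReal (2 * d) * (∫⁻ q, ENNReal.ofReal (dist b q) ∂Q) +
          ENNReal.ofReal (3 * d ^ 2)) := by
    intro a b d
    rw [lintegral_add_left (hmeas a), lintegral_add_left ((hmeasd b).const_mul _),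
      lintegral_const_mul _ (hmeasd b), lintegral_const, measure_univ, mul_one, hF a]
  have expand : ∀ p p' : S, F p ≤ F p' +
      (ENNReal.ofReal (2 * dist p p') * (∫⁻ q, ENNReal.ofReal (dist p' q) ∂Q) +
        ENNReal.ofReal (3 * dist p p' ^ 2)) := by
    intro p p'
    have hpt : ∀ q, ENNReal.ofReal (dist p q ^ 2) ≤ ENNReal.ofReal (dist p' q ^ 2) +
        (ENNReal.ofReal (2 * dist p p') * ENNReal.ofReal (dist p' q) +
          ENNReal.ofReal (3 * dist p p' ^ 2)) := by
      intro q
      rw [← ENNReal.ofReal_mul (by positivity),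
        ← ENNReal.ofReal_add (by positivity) (by positivity),
        ← ENNReal.ofReal_add (by positivity) (by positivity)]
      apply ENNReal.ofReal_le_ofReal
      have ht := dist_triangle p p' q
      have h2 : dist p q ^ 2 ≤ (dist p p' + dist p' q) ^ 2 := pow_le_pow_left₀ dist_nonneg ht 2
      nlinarith [h2, sq_nonneg (dist p p')]
    calc F p = ∫⁻ q, ENNReal.ofReal (dist p q ^ 2) ∂Q := hF p
      _ ≤ _ := lintegral_mono hpt
      _ = _ := integ p' p' (dist p p')
  have expand2 : ∀ p p' : S, F p' ≤ F p +
      (ENNReal.ofReal (2 * dist p p') * (∫⁻ q, ENNReal.ofReal (dist p' q) ∂Q) +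
        ENNReal.ofReal (3 * dist p p' ^ 2)) := by
    intro p p'
    have hpt : ∀ q, ENNReal.ofReal (dist p' q ^ 2) ≤ ENNReal.ofReal (dist p q ^ 2) +
        (ENNReal.ofReal (2 * dist p p') * ENNReal.ofReal (dist p' q) +
          ENNReal.ofReal (3 * dist p p' ^ 2)) := by
      intro q
      rw [← ENNReal.ofReal_mul (by positivity),
        ← ENNReal.ofReal_add (by positivity) (by positivity),
        ← ENNReal.ofReal_add (by positivity) (by positivity)]
      apply ENNReal.ofReal_le_ofReal
      have ht1 : dist p' q ≤ dist p p' + dist p q := by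
        rw [dist_comm p p']; exact dist_triangle p' p q
      have ht2 : dist p q ≤ dist p p' + dist p' q := dist_triangle p p' q
      have h2 : dist p' q ^ 2 ≤ (dist p p' + dist p q) ^ 2 := pow_le_pow_left₀ dist_nonneg ht1 2
      have h3 : 2 * dist p p' * dist p q ≤ 2 * dist p p' * (dist p p' + dist p' q) :=
        mul_le_mul_of_nonneg_left ht2 (by positivity)
      nlinarith [h2, h3]
    calc F p' = ∫⁻ q, ENNReal.ofReal (dist p' q ^ 2) ∂Q := hF p'
      _ ≤ _ := lintegral_mono hpt
      _ = _ := integ p p' (dist p p')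
  -- the first moment is controlled by F
  have Jle : ∀ p : S, (∫⁻ q, ENNReal.ofReal (dist p q) ∂Q) ≤ 1 + F p := by
    intro p
    have hpt : ∀ q, ENNReal.ofReal (dist p q) ≤ 1 + ENNReal.ofReal (dist p q ^ 2) := by
      intro q
      rw [← ENNReal.ofReal_one, ← ENNReal.ofReal_add (by norm_num) (by positivity)]
      exact ENNReal.ofReal_le_ofReal (by nlinarith [sq_nonneg (dist p q - 1)])
    calc (∫⁻ q, ENNReal.ofReal (dist p q) ∂Q)
        ≤ ∫⁻ q, (1 + ENNReal.ofReal (dist p q ^ 2)) ∂Q := lintegral_mono hpt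
      _ = 1 + F p := by
          rw [lintegral_add_left measurable_const, lintegral_const, measure_univ, mul_one, hF p]
  have hJ₀ : (∫⁻ q, ENNReal.ofReal (dist p₀ q) ∂Q) ≠ ⊤ :=
    ne_top_of_le_ne_top (ENNReal.add_ne_top.2 ⟨ENNReal.one_ne_top, hp₀.ne⟩) (Jle p₀)
  have hFfin : ∀ p, F p ≠ ⊤ := by
    intro p
    refine ne_top_of_le_ne_top ?_ (expand p p₀)
    exact ENNReal.add_ne_top.2 ⟨hp₀.ne, ENNReal.add_ne_top.2
      ⟨ENNReal.mul_ne_top ENNReal.ofReal_ne_top hJ₀, ENNReal.ofReal_ne_top⟩⟩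
  have hJfin : ∀ p : S, (∫⁻ q, ENNReal.ofReal (dist p q) ∂Q) ≠ ⊤ := fun p =>
    ne_top_of_le_ne_top (ENNReal.add_ne_top.2 ⟨ENNReal.one_ne_top, hFfin p⟩) (Jle p)
  -- continuity of F
  have hcont : Continuous F := by
    rw [continuous_iff_continuousAt]
    intro x
    set J : ℝ≥0∞ := ∫⁻ q, ENNReal.ofReal (dist x q) ∂Q with hJdef
    set err : S → ℝ≥0∞ := fun p =>
      ENNReal.ofReal (2 * dist p x) * J + ENNReal.ofReal (3 * dist p x ^ 2) with herrdef
    have herr0 : Tendsto err (𝓝 x) (𝓝 0) := by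
      have h1 : Tendsto (fun p : S => ENNReal.ofReal (2 * dist p x)) (𝓝 x) (𝓝 0) := by
        have hc : Continuous fun p : S => ENNReal.ofReal (2 * dist p x) :=
          ENNReal.continuous_ofReal.comp (by fun_prop)
        simpa [dist_self] using hc.tendsto x
      have h2 : Tendsto (fun p : S => ENNReal.ofReal (3 * dist p x ^ 2)) (𝓝 x) (𝓝 0) := by
        have hc : Continuous fun p : S => ENNReal.ofReal (3 * dist p x ^ 2) :=
          ENNReal.continuous_ofReal.comp (by fun_prop)
        simpa [dist_self] using hc.tendsto x
      have := (ENNReal.Tendsto.mul_const h1 (Or.inr (hJfin x))).add h2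
      simpa only [zero_mul, add_zero] using this
    have hub : ∀ p, F p ≤ F x + err p := fun p => expand p x
    have hlb : ∀ p, F x - err p ≤ F p := by
      intro p
      exact tsub_le_iff_right.2 (expand2 p x)
    have hlow : Tendsto (fun p => F x - err p) (𝓝 x) (𝓝 (F x)) := by
      have := ENNReal.Tendsto.sub
        (tendsto_const_nhds : Tendsto (fun _ : S => F x) (𝓝 x) (𝓝 (F x))) herr0
        (Or.inl (hFfin x))
      simpa using this
    have hup : Tendsto (fun p => F x + err p) (𝓝 x) (𝓝 (F x)) := by
      have := Tendsto.add
        (tendsto_const_nhds : Tendsto (fun _ : S => F x) (𝓝 x) (𝓝 (F x))) herr0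
      simpa using this
    exact tendsto_of_tendsto_of_tendsto_of_le_of_le hlow hup hlb hub
  -- doubling bound: distance to a point is controlled by F
  have dbound : ∀ p p' : S, ENNReal.ofReal (dist p p' ^ 2) ≤ 2 * F p + 2 * F p' := by
    intro p p'
    have hpt : ∀ q, ENNReal.ofReal (dist p p' ^ 2) ≤
        2 * ENNReal.ofReal (dist p q ^ 2) + 2 * ENNReal.ofReal (dist p' q ^ 2) := by
      intro q
      have h2 : (2 : ℝ≥0∞) = ENNReal.ofReal 2 := by
        rw [ENNReal.ofReal_ofNat]
      rw [h2, ← ENNReal.ofReal_mul (by norm_num), ← ENNReal.ofReal_mul (by norm_num),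
        ← ENNReal.ofReal_add (by positivity) (by positivity)]
      apply ENNReal.ofReal_le_ofReal
      have ht : dist p p' ≤ dist p q + dist p' q := by
        rw [dist_comm p' q]; exact dist_triangle p q p'
      have hsq : dist p p' ^ 2 ≤ (dist p q + dist p' q) ^ 2 := pow_le_pow_left₀ dist_nonneg ht 2
      nlinarith [hsq, sq_nonneg (dist p q - dist p' q)]
    calc ENNReal.ofReal (dist p p' ^ 2)
        = ∫⁻ _, ENNReal.ofReal (dist p p' ^ 2) ∂Q := by
          rw [lintegral_const, measure_univ, mul_one]
      _ ≤ ∫⁻ q, (2 * ENNReal.ofReal (dist p q ^ 2) + 2 * ENNReal.ofReal (dist p' q ^ 2)) ∂Q :=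
          lintegral_mono hpt
      _ = 2 * F p + 2 * F p' := by
          rw [lintegral_add_left ((hmeas p).const_mul _), lintegral_const_mul _ (hmeas p),
            lintegral_const_mul _ (hmeas p'), hF p, hF p']
  set R : ℝ := Real.sqrt ((4 * F p₀).toReal) with hRdef
  set K : Set S := Metric.closedBall p₀ R with hKdef
  have hsub : ∀ p : S, F p ≤ F p₀ → p ∈ K := by
    intro p hp
    have h1 : ENNReal.ofReal (dist p p₀ ^ 2) ≤ 4 * F p₀ := by
      refine le_trans (dbound p p₀) ?_
      have : 2 * F p + 2 * F p₀ ≤ 2 * F p₀ + 2 * F p₀ :=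
        add_le_add_left (mul_le_mul_right hp 2) _
      refine le_trans this (le_of_eq ?_)
      ring
    have h4 : (4 * F p₀) ≠ ⊤ := ENNReal.mul_ne_top (by norm_num) (hFfin p₀)
    have h2 : dist p p₀ ^ 2 ≤ (4 * F p₀).toReal := by
      have := ENNReal.toReal_mono h4 h1
      rwa [ENNReal.toReal_ofReal (by positivity)] at this
    have : dist p p₀ ≤ R := by
      calc dist p p₀ = Real.sqrt (dist p p₀ ^ 2) := (Real.sqrt_sq dist_nonneg).symm
        _ ≤ R := Real.sqrt_le_sqrt h2
    exact Metric.mem_closedBall.2 this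
  have hKcomp : IsCompact K := isCompact_closedBall p₀ R
  have hp₀K : p₀ ∈ K := Metric.mem_closedBall_self (Real.sqrt_nonneg _)
  obtain ⟨pm, hpmK, hpmin⟩ := hKcomp.exists_isMinOn ⟨p₀, hp₀K⟩ hcont.continuousOn
  have hglobal : ∀ q, F pm ≤ F q := by
    intro q
    by_contra h
    push_neg at h
    have hq : F q ≤ F p₀ := le_of_lt (lt_of_lt_of_le h (hpmin hp₀K))
    exact absurd (hpmin (hsub q hq)) (not_le.2 h)
  refine ⟨⟨pm, hglobal⟩, ?_⟩
  have hclosed : IsClosed {p : S | ∀ q, F p ≤ F q} := by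
    have heq : {p : S | ∀ q, F p ≤ F q} = ⋂ q, {p : S | F p ≤ F q} := by
      ext p; simp [Set.mem_iInter]
    rw [heq]
    exact isClosed_iInter fun q => isClosed_le hcont continuous_const
  refine hKcomp.of_isClosed_subset hclosed ?_
  intro p hp
  exact hsub p (hp p₀)
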